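/- For q ∈ (0,1) and R > 0, the conformal metric on D(R)\{0} with density λ(z) = 2q R^q |z|^{q-1}/(R^{2q} - |z|^{2q}) has constant Gaussian curvature -1, i.e., Δ(log λ) = λ² away from the origin. -/

import Mathlib

open Real

lemma posD (q R : ℝ) (hq : 0 < q) (hR : 0 < R) {w : ℝ} (hw0 : 0 ≤ w) (hwR : w < R^2) :
    w ^ q < R ^ (2*q) := by
  have h : (R^2:ℝ) ^ q = R ^ (2*q) := by
    rw [← Real.rpow_natCast R 2, ← Real.rpow_mul hR.le]; norm_num
  calc w ^ q < (R^2 : ℝ) ^ q := Real.rpow_lt_rpow hw0 hwR hq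
    _ = _ := h

lemma aux1 (q R : ℝ) (hq : 0 < q) (hR : 0 < R) {w : ℝ} (hw0 : 0 < w) (hwR : w < R^2) :
    HasDerivAt (fun w : ℝ => (q-1)/2 * Real.log w - Real.log (R^(2*q) - w^q))
      ((q-1)/2 * w⁻¹ + q * w^(q-1) / (R^(2*q) - w^q)) w := by
  have hD : 0 < R^(2*q) - w^q := sub_pos.2 (posD q R hq hR hw0.le hwR)
  have h1 : HasDerivAt (fun w:ℝ => Real.log w) w⁻¹ w := Real.hasDerivAt_log hw0.ne'
  have h2 : HasDerivAt (fun w:ℝ => w^q) (q*w^(q-1)) w :=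
    Real.hasDerivAt_rpow_const (Or.inl hw0.ne')
  have h3 : HasDerivAt (fun w:ℝ => R^(2*q) - w^q) (-(q*w^(q-1))) w := h2.const_sub _
  have h4 : HasDerivAt (fun w:ℝ => Real.log (R^(2*q) - w^q))
      ((R^(2*q) - w^q)⁻¹ * -(q*w^(q-1))) w := by
    have := (Real.hasDerivAt_log hD.ne').comp w h3; exact this
  have h5 := (h1.const_mul ((q-1)/2)).sub h4
  exact h5.congr_deriv (by ring)

/-- derivative of G' -/
lemma aux2 (q R : ℝ) (hq : 0 < q) (hR : 0 < R) {w : ℝ} (hw0 : 0 < w) (hwR : w < R^2) :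
    HasDerivAt (fun w : ℝ => (q-1)/2 * w⁻¹ + q * w^(q-1) / (R^(2*q) - w^q))
      ((q-1)/2 * (-(w^2)⁻¹) +
        (q*(q-1)*w^(q-2) * (R^(2*q) - w^q) - q*w^(q-1) * (-(q*w^(q-1)))) / (R^(2*q) - w^q)^2)
      w := by
  have hD : 0 < R^(2*q) - w^q := sub_pos.2 (posD q R hq hR hw0.le hwR)
  have h1 : HasDerivAt (fun w:ℝ => w⁻¹) (-(w^2)⁻¹) w := hasDerivAt_inv hw0.ne'
  have h2 : HasDerivAt (fun w:ℝ => w^(q-1)) ((q-1)*w^(q-1-1)) w :=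
    Real.hasDerivAt_rpow_const (Or.inl hw0.ne')
  have h2' : HasDerivAt (fun w:ℝ => q * w^(q-1)) (q*((q-1)*w^(q-2))) w := by
    have : (q-1-1 : ℝ) = q-2 := by ring
    exact this ▸ h2.const_mul q
  have h3 : HasDerivAt (fun w:ℝ => R^(2*q) - w^q) (-(q*w^(q-1))) w :=
    (Real.hasDerivAt_rpow_const (Or.inl hw0.ne')).const_sub _
  have h4 := h2'.div h3 hD.ne'
  have h5 := (h1.const_mul ((q-1)/2)).add h4
  exact h5.congr_deriv (by ring)

lemma aux3 (q R : ℝ) (hq : 0 < q) (hR : 0 < R) {w : ℝ} (hw0 : 0 < w) (hwR : w < R^2) :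
    4*w*((q-1)/2 * (-(w^2)⁻¹) +
        (q*(q-1)*w^(q-2) * (R^(2*q) - w^q) - q*w^(q-1) * (-(q*w^(q-1)))) / (R^(2*q) - w^q)^2)
      + 4*((q-1)/2 * w⁻¹ + q * w^(q-1) / (R^(2*q) - w^q))
      = 4*q^2*R^(2*q)*w^(q-1) / (R^(2*q) - w^q)^2 := by
  have hD : 0 < R^(2*q) - w^q := sub_pos.2 (posD q R hq hR hw0.le hwR)
  have e1 : w^(q-1) = w^q / w := by
    rw [Real.rpow_sub hw0, Real.rpow_one]
  have e2 : w^(q-2) = w^q / w^2 := by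
    rw [Real.rpow_sub hw0, Real.rpow_two]
  rw [e1, e2]
  have hD' : R^(q*2) - w^q ≠ 0 := by rw [mul_comm]; exact hD.ne'
  field_simp
  ring

/-- first derivative of x ↦ C + G(x²+c) -/
lemma aux4 (q R : ℝ) (hq : 0 < q) (hR : 0 < R) (C c : ℝ) {x : ℝ}
    (h : x^2 + c ∈ Set.Ioo (0:ℝ) (R^2)) :
    HasDerivAt (fun t : ℝ => C + ((q-1)/2 * Real.log (t^2+c) - Real.log (R^(2*q) - (t^2+c)^q)))
      (((q-1)/2 * (x^2+c)⁻¹ + q * (x^2+c)^(q-1) / (R^(2*q) - (x^2+c)^q)) * (2*x)) x := by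
  have hsq : HasDerivAt (fun t : ℝ => t^2 + c) (2*x) x := by
    simpa using (hasDerivAt_pow 2 x).add_const c
  exact (((aux1 q R hq hR h.1 h.2).comp x hsq).const_add C)

lemma aux6 (q R : ℝ) (hq : 0 < q) (hR : 0 < R) (C c : ℝ) {x : ℝ}
    (h : x^2 + c ∈ Set.Ioo (0:ℝ) (R^2)) :
    deriv (deriv (fun t : ℝ =>
        C + ((q-1)/2 * Real.log (t^2+c) - Real.log (R^(2*q) - (t^2+c)^q)))) x =
      ((q-1)/2 * (-((x^2+c)^2)⁻¹) +
        (q*(q-1)*(x^2+c)^(q-2) * (R^(2*q) - (x^2+c)^q) - q*(x^2+c)^(q-1) * (-(q*(x^2+c)^(q-1))))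
          / (R^(2*q) - (x^2+c)^q)^2) * (2*x) * (2*x)
      + ((q-1)/2 * (x^2+c)⁻¹ + q * (x^2+c)^(q-1) / (R^(2*q) - (x^2+c)^q)) * 2 := by
  have hS : IsOpen {t : ℝ | t^2 + c ∈ Set.Ioo (0:ℝ) (R^2)} :=
    (isOpen_Ioo).preimage (by continuity)
  have hEq : deriv (fun t : ℝ =>
        C + ((q-1)/2 * Real.log (t^2+c) - Real.log (R^(2*q) - (t^2+c)^q)))
      =ᶠ[nhds x] fun t =>
        ((q-1)/2 * (t^2+c)⁻¹ + q * (t^2+c)^(q-1) / (R^(2*q) - (t^2+c)^q)) * (2*t) := by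
    filter_upwards [hS.mem_nhds h] with t ht
    exact (aux4 q R hq hR C c ht).deriv
  rw [hEq.deriv_eq]
  have hsq : HasDerivAt (fun t : ℝ => t^2 + c) (2*x) x := by
    simpa using (hasDerivAt_pow 2 x).add_const c
  have h1 := (aux2 q R hq hR h.1 h.2).comp x hsq
  have h2 : HasDerivAt (fun t : ℝ => 2*t) 2 x := by
    simpa using (hasDerivAt_id x).const_mul 2
  have h3 := (h1.mul h2)
  simp only [Function.comp] at h3
  exact h3.deriv

lemma sq_rpow' (x p : ℝ) (hx : 0 ≤ x) : ((x^p)^(2:ℕ) : ℝ) = (x^(2:ℕ))^p := by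
  rw [← Real.rpow_natCast (x^p) 2, ← Real.rpow_mul hx, mul_comm,
    Real.rpow_mul hx, Real.rpow_natCast]

lemma two_mul_rpow (x p : ℝ) (hx : 0 ≤ x) : (x^(2*p) : ℝ) = (x^(2:ℕ))^p := by
  rw [← Real.rpow_natCast x 2, ← Real.rpow_mul hx]
  norm_num

lemma logeq (q R : ℝ) (hq : 0 < q) (hR : 0 < R) (lam : ℂ → ℝ)
    (hlam : ∀ z : ℂ, lam z =
      2 * q * R ^ q * (‖z‖) ^ (q - 1) / (R ^ (2 * q) - (‖z‖) ^ (2 * q)))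
    (x y : ℝ) (h : x^2 + y^2 ∈ Set.Ioo (0:ℝ) (R^2)) :
    Real.log (lam ((x:ℂ) + y*Complex.I)) =
      Real.log (2*q*R^q) +
        ((q-1)/2 * Real.log (x^2+y^2) - Real.log (R^(2*q) - (x^2+y^2)^q)) := by
  set r := ‖(x:ℂ) + y*Complex.I‖ with hrdef
  have hr2 : r^2 = x^2 + y^2 := by
    rw [hrdef, Complex.sq_norm, Complex.normSq_add_mul_I]
  have hrnn : 0 ≤ r := norm_nonneg _
  have hr : 0 < r := by nlinarith [h.1]
  have habs : r ^ (2*q) = (x^2+y^2)^q := by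
    rw [← hr2, two_mul_rpow r q hrnn]
  have hnum : (0:ℝ) < 2*q*R^q * r^(q-1) := by positivity
  have hden : 0 < R^(2*q) - r^(2*q) := by
    rw [habs]; exact sub_pos.2 (posD q R hq hR h.1.le h.2)
  have hlog : Real.log (x^2+y^2) = 2 * Real.log r := by
    rw [← hr2, Real.log_pow]; push_cast; ring
  rw [hlam, ← hrdef, Real.log_div hnum.ne' hden.ne',
    Real.log_mul (by positivity) (by positivity), Real.log_rpow hr, habs, hlog]
  ring

/-- The conformal metric with density `λ(z) = 2qR^q|z|^{q-1}/(R^{2q}-|z|^{2q})` on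
`D(R)\{0}` has constant curvature `-1`: `Δ(log λ) = λ²` away from the origin. -/
theorem stmt_11 (q R : ℝ) (hq : q ∈ Set.Ioo (0 : ℝ) 1) (hR : 0 < R)
    (lam : ℂ → ℝ)
    (hlam : ∀ z : ℂ, lam z =
      2 * q * R ^ q * (‖z‖) ^ (q - 1) / (R ^ (2 * q) - (‖z‖) ^ (2 * q)))
    (z : ℂ) (hz : z ∈ Metric.ball (0 : ℂ) R \ {0}) :
    deriv (deriv (fun x : ℝ => Real.log (lam ((x : ℂ) + z.im * Complex.I)))) z.re +
      deriv (deriv (fun y : ℝ => Real.log (lam ((z.re : ℂ) + y * Complex.I)))) z.im =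
      lam z ^ 2 := by
  obtain ⟨hq0, hq1⟩ := hq
  have hz0 : z ≠ 0 := hz.2
  have habsR : ‖z‖ < R := by
    have := hz.1
    rwa [mem_ball_zero_iff] at this
  have h1 : (‖z‖)^2 = z.re^2 + z.im^2 := by
    rw [Complex.sq_norm, Complex.normSq_apply]; ring
  have hu : z.re^2 + z.im^2 ∈ Set.Ioo (0:ℝ) (R^2) := by
    constructor
    · rw [← h1]; exact pow_pos (norm_pos_iff.mpr hz0) 2
    · rw [← h1]; nlinarith [norm_nonneg z]
  set C := Real.log (2*q*R^q) with hC
  -- x-direction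
  have hSx : IsOpen {t : ℝ | t^2 + z.im^2 ∈ Set.Ioo (0:ℝ) (R^2)} :=
    isOpen_Ioo.preimage (by continuity)
  have hmemx : z.re ∈ {t : ℝ | t^2 + z.im^2 ∈ Set.Ioo (0:ℝ) (R^2)} := hu
  have hEqx : (fun x : ℝ => Real.log (lam ((x : ℂ) + z.im * Complex.I)))
      =ᶠ[nhds z.re] (fun t : ℝ =>
        C + ((q-1)/2 * Real.log (t^2+z.im^2) - Real.log (R^(2*q) - (t^2+z.im^2)^q))) := by
    filter_upwards [hSx.mem_nhds hmemx] with t ht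
    exact logeq q R hq0 hR lam hlam t z.im ht
  have hx := (hEqx.deriv).deriv_eq
  rw [hx, aux6 q R hq0 hR C (z.im^2) hu]
  -- y-direction
  have hSy : IsOpen {t : ℝ | t^2 + z.re^2 ∈ Set.Ioo (0:ℝ) (R^2)} :=
    isOpen_Ioo.preimage (by continuity)
  have hmemy : z.im ∈ {t : ℝ | t^2 + z.re^2 ∈ Set.Ioo (0:ℝ) (R^2)} := by
    simp only [Set.mem_setOf_eq]
    rwa [add_comm]
  have hEqy : (fun y : ℝ => Real.log (lam ((z.re : ℂ) + y * Complex.I)))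
      =ᶠ[nhds z.im] (fun t : ℝ =>
        C + ((q-1)/2 * Real.log (t^2+z.re^2) - Real.log (R^(2*q) - (t^2+z.re^2)^q))) := by
    filter_upwards [hSy.mem_nhds hmemy] with t ht
    have := logeq q R hq0 hR lam hlam z.re t (by rwa [add_comm] at ht)
    rwa [add_comm (z.re^2) (t^2)] at this
  have hy := (hEqy.deriv).deriv_eq
  rw [hy, aux6 q R hq0 hR C (z.re^2) hmemy]
  rw [show z.im^2 + z.re^2 = z.re^2 + z.im^2 by ring]
  have key := aux3 q R hq0 hR hu.1 hu.2
  -- rewrite lam z ^ 2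
  have hr2q : (‖z‖) ^ (2*q) = (z.re^2+z.im^2)^q := by
    rw [two_mul_rpow _ q (norm_nonneg z), h1]
  have hrq1 : ((‖z‖) ^ (q-1))^(2:ℕ) = (z.re^2+z.im^2)^(q-1) := by
    rw [sq_rpow' _ (q-1) (norm_nonneg z), h1]
  have hRq : ((R:ℝ)^q)^(2:ℕ) = R^(2*q) := by
    rw [sq_rpow' R q hR.le, ← two_mul_rpow R q hR.le]
  rw [hlam z, div_pow, mul_pow, mul_pow, hrq1, hRq, hr2q]
  linear_combination key
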